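/- On the canonically symplectic phase space ℝ⁴ with coordinates (u₁, u₂, p_{u₁}, p_{u₂}) and brackets {uᵢ, p_{uⱼ}} = δᵢⱼ, the functions a = p_{u₁}²/(u₁−u₂) + p_{u₂}²/(u₂−u₁) − u₁² − u₁u₂ − u₂² and b = u₂p_{u₁}²/(u₂−u₁) + u₁p_{u₂}²/(u₁−u₂) + (u₁+u₂)u₁u₂ satisfy {a, b} = 0 on the open set where u₁ ≠ u₂. -/

import Mathlib

/-- Canonical Poisson bracket on phase space ℝ⁴ with coordinates
(u₁, u₂, p₁, p₂):  {F,G} = Σᵢ (∂F/∂uᵢ ∂G/∂pᵢ − ∂F/∂pᵢ ∂G/∂uᵢ). -/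
noncomputable def pb (F G : ℝ × ℝ × ℝ × ℝ → ℝ) (z : ℝ × ℝ × ℝ × ℝ) : ℝ :=
  fderiv ℝ F z (1, 0, 0, 0) * fderiv ℝ G z (0, 0, 1, 0)
  - fderiv ℝ F z (0, 0, 1, 0) * fderiv ℝ G z (1, 0, 0, 0)
  + fderiv ℝ F z (0, 1, 0, 0) * fderiv ℝ G z (0, 0, 0, 1)
  - fderiv ℝ F z (0, 0, 0, 1) * fderiv ℝ G z (0, 1, 0, 0)

/-- The functions a and b are in involution on {u₁ ≠ u₂}. -/
theorem stmt_1 :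
    ∀ z : ℝ × ℝ × ℝ × ℝ, z.1 ≠ z.2.1 →
      pb (fun z => z.2.2.1 ^ 2 / (z.1 - z.2.1) + z.2.2.2 ^ 2 / (z.2.1 - z.1)
            - z.1 ^ 2 - z.1 * z.2.1 - z.2.1 ^ 2)
         (fun z => z.2.1 * z.2.2.1 ^ 2 / (z.2.1 - z.1)
            + z.1 * z.2.2.2 ^ 2 / (z.1 - z.2.1)
            + (z.1 + z.2.1) * z.1 * z.2.1) z = 0 := by
  intro z hz
  have h1 : z.1 - z.2.1 ≠ 0 := sub_ne_zero.mpr hz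
  have h2 : z.2.1 - z.1 ≠ 0 := sub_ne_zero.mpr hz.symm
  have hX : HasFDerivAt (fun w : ℝ × ℝ × ℝ × ℝ => w.1)
      (ContinuousLinearMap.fst ℝ ℝ (ℝ × ℝ × ℝ)) z := hasFDerivAt_fst
  have hY : HasFDerivAt (fun w : ℝ × ℝ × ℝ × ℝ => w.2.1)
      ((ContinuousLinearMap.fst ℝ ℝ (ℝ × ℝ)).comp
        (ContinuousLinearMap.snd ℝ ℝ (ℝ × ℝ × ℝ))) z :=
    hasFDerivAt_fst.comp z hasFDerivAt_snd
  have hP : HasFDerivAt (fun w : ℝ × ℝ × ℝ × ℝ => w.2.2.1)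
      ((ContinuousLinearMap.fst ℝ ℝ ℝ).comp
        ((ContinuousLinearMap.snd ℝ ℝ (ℝ × ℝ)).comp
          (ContinuousLinearMap.snd ℝ ℝ (ℝ × ℝ × ℝ)))) z :=
    hasFDerivAt_fst.comp z (hasFDerivAt_snd.comp z hasFDerivAt_snd)
  have hQ : HasFDerivAt (fun w : ℝ × ℝ × ℝ × ℝ => w.2.2.2)
      ((ContinuousLinearMap.snd ℝ ℝ ℝ).comp
        ((ContinuousLinearMap.snd ℝ ℝ (ℝ × ℝ)).comp
          (ContinuousLinearMap.snd ℝ ℝ (ℝ × ℝ × ℝ)))) z :=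
    hasFDerivAt_snd.comp z (hasFDerivAt_snd.comp z hasFDerivAt_snd)
  have hI1 : HasFDerivAt (fun w : ℝ × ℝ × ℝ × ℝ => (w.1 - w.2.1)⁻¹) _ z :=
    (hasDerivAt_inv h1).comp_hasFDerivAt z (hX.sub hY)
  have hI2 : HasFDerivAt (fun w : ℝ × ℝ × ℝ × ℝ => (w.2.1 - w.1)⁻¹) _ z :=
    (hasDerivAt_inv h2).comp_hasFDerivAt z (hY.sub hX)
  have hA := ((((hP.mul hP).mul hI1).add
      ((hQ.mul hQ).mul hI2)).sub (hX.mul hX)).sub (hX.mul hY) |>.sub (hY.mul hY)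
  have hB := (((hY.mul (hP.mul hP)).mul hI2).add
      ((hX.mul (hQ.mul hQ)).mul hI1)).add (((hX.add hY).mul hX).mul hY)
  rw [pb]
  simp_rw [pow_two, div_eq_mul_inv]
  rw [(show HasFDerivAt (fun z : ℝ × ℝ × ℝ × ℝ => z.2.2.1 * z.2.2.1 * (z.1 - z.2.1)⁻¹ + z.2.2.2 * z.2.2.2 * (z.2.1 - z.1)⁻¹ - z.1 * z.1 - z.1 * z.2.1 - z.2.1 * z.2.1) _ z from hA).fderiv,
    (show HasFDerivAt (fun z : ℝ × ℝ × ℝ × ℝ => z.2.1 * (z.2.2.1 * z.2.2.1) * (z.2.1 - z.1)⁻¹ + z.1 * (z.2.2.2 * z.2.2.2) * (z.1 - z.2.1)⁻¹ + (z.1 + z.2.1) * z.1 * z.2.1) _ z from hB).fderiv]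
  simp only [ContinuousLinearMap.sub_apply, ContinuousLinearMap.add_apply,
    ContinuousLinearMap.smul_apply, ContinuousLinearMap.comp_apply,
    ContinuousLinearMap.coe_fst', ContinuousLinearMap.coe_snd', smul_eq_mul, Pi.mul_apply, Pi.add_apply]
  field_simp
  ring
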